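/- arXiv:0704.1503 — 2 statements merged into one kernel-verified Lean document; each statement's English description precedes it below -/
import Mathlib

section
/- For every n ≥ 2 and 0 ≤ a ≤ n, the recursively defined operators on V_a^n satisfy X_{n−1}^+ X_{n−1}^- − X_{n−1}^- X_{n−1}^+ = (K_{n−1} − K_{n−1}^{-1})/(q − q^{-1}) as endomorphisms of V_a^n. -/
noncomputable section

open scoped TensorProduct

set_option maxHeartbeats 1000000
set_option synthInstance.maxHeartbeats 400000

/-- The ground field `𝔸 = ℚ(q)`. -/
abbrev A : Type := RatFunc ℚ

/-- The element `q ∈ 𝔸`. -/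
def qq : A := RatFunc.X

/-- The set of `a`-element subsets of `{0, 1, …, n-1}` (a model for the
`a`-element subsets of `{1, …, n}`), the basis of `V_a^n`. -/
abbrev BS (n a : ℕ) : Type := {s : Finset ℕ // s ⊆ Finset.range n ∧ s.card = a}

instance BS.fintype (n a : ℕ) : Fintype (BS n a) :=
  Fintype.subtype ((Finset.range n).powerset.filter fun s => s.card = a) (by
    intro s
    simp [Finset.mem_powerset, Finset.mem_filter])

/-- The fundamental representation `V_a^n`, as the `𝔸`-vector space with basis the
`a`-element subsets of an `n`-element set. -/
abbrev V (n a : ℕ) : Type := BS n a → A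

/-- `i₋₁ : V_{a-1}^{n-1} → V_a^n` (here with indices shifted:
`iminus n a : V_a^n → V_{a+1}^{n+1}`), the inclusion of the summand of subsets containing
the new top element `n`. -/
def iminus (n a : ℕ) : V n a →ₗ[A] V (n+1) (a+1) where
  toFun f s := if h : n ∈ s.1 then
      f ⟨s.1.erase n, by
        constructor
        · intro x hx
          have hx' := Finset.mem_erase.mp hx
          have hx2 := s.2.1 hx'.2
          simp only [Finset.mem_range] at hx2 ⊢
          omega
        · rw [Finset.card_erase_of_mem h, s.2.2]; omega⟩
    else 0
  map_add' f g := by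
    funext s
    simp only [Pi.add_apply]
    by_cases h : n ∈ s.1 <;> simp [h]
  map_smul' c f := by
    funext s
    simp only [Pi.smul_apply, smul_eq_mul, RingHom.id_apply]
    by_cases h : n ∈ s.1 <;> simp [h]

/-- `i₀ : V_a^{n-1} → V_a^n` (as `izero n a : V_a^n → V_a^{n+1}`), the inclusion of the
summand of subsets not containing the new top element. -/
def izero (n a : ℕ) : V n a →ₗ[A] V (n+1) a where
  toFun f s := if h : n ∈ s.1 then 0 else
      f ⟨s.1, by
        refine ⟨fun x hx => ?_, s.2.2⟩
        have hx2 := s.2.1 hx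
        simp only [Finset.mem_range] at hx2 ⊢
        rcases Nat.lt_succ_iff_lt_or_eq.mp hx2 with h' | h'
        · exact h'
        · exact absurd (h' ▸ hx) h⟩
  map_add' f g := by
    funext s
    simp only [Pi.add_apply]
    by_cases h : n ∈ s.1 <;> simp [h]
  map_smul' c f := by
    funext s
    simp only [Pi.smul_apply, smul_eq_mul, RingHom.id_apply]
    by_cases h : n ∈ s.1 <;> simp [h]

/-- `p₋₁ : V_a^n → V_{a-1}^{n-1}` (as `pminus n a : V_{a+1}^{n+1} → V_a^n`), the projection
onto the summand of subsets containing the top element. -/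
def pminus (n a : ℕ) : V (n+1) (a+1) →ₗ[A] V n a where
  toFun f t := f ⟨insert n t.1, by
    have hn : n ∉ t.1 := fun h => by
      have := t.2.1 h; simp [Finset.mem_range] at this
    constructor
    · intro x hx
      rcases Finset.mem_insert.mp hx with rfl | hx
      · simp
      · have := t.2.1 hx; simp only [Finset.mem_range] at this ⊢; omega
    · rw [Finset.card_insert_of_notMem hn, t.2.2]⟩
  map_add' f g := rfl
  map_smul' c f := rfl

/-- `p₀ : V_a^n → V_a^{n-1}` (as `pzero n a : V_a^{n+1} → V_a^n`), the projection onto the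
summand of subsets not containing the top element. -/
def pzero (n a : ℕ) : V (n+1) a →ₗ[A] V n a where
  toFun f t := f ⟨t.1, by
    refine ⟨fun x hx => ?_, t.2.2⟩
    have := t.2.1 hx; simp only [Finset.mem_range] at this ⊢; omega⟩
  map_add' f g := rfl
  map_smul' c f := rfl

/-- The diagonal operator on `V_a^n` acting by the scalar `x` on basis subsets containing `m`
and by `y` on those not containing `m`; for `m = n-1` this is `x • i₋₁ p₋₁ + y • i₀ p₀`. -/
def diagOp (n a m : ℕ) (x y : A) : Module.End A (V n a) where
  toFun f s := (if m ∈ s.1 then x else y) * f s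
  map_add' f g := by
    funext s
    simp only [Pi.add_apply]
    ring
  map_smul' c f := by
    funext s
    simp only [Pi.smul_apply, smul_eq_mul, RingHom.id_apply]
    ring

/-- The recursively defined action of the generator `X_i^+` on `V_a^n`
(`XpOp n a i`, where `i` is the literal subscript, `1 ≤ i ≤ n-1`). -/
def XpOp : (n a i : ℕ) → Module.End A (V n a)
  | 0, _, _ => 0
  | 1, _, _ => 0
  | _+2, 0, _ => 0
  | n+2, a+1, i =>
    if a + 1 = n + 2 then 0
    else if i = n + 1 then
      (iminus (n+1) a) ∘ₗ (izero n a) ∘ₗ (pminus n a) ∘ₗ (pzero (n+1) (a+1))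
    else
      (iminus (n+1) a) ∘ₗ (XpOp (n+1) a i) ∘ₗ (pminus (n+1) a)
      + (izero (n+1) (a+1)) ∘ₗ (XpOp (n+1) (a+1) i) ∘ₗ (pzero (n+1) (a+1))

/-- The recursively defined action of the generator `X_i^-` on `V_a^n`. -/
def XmOp : (n a i : ℕ) → Module.End A (V n a)
  | 0, _, _ => 0
  | 1, _, _ => 0
  | _+2, 0, _ => 0
  | n+2, a+1, i =>
    if a + 1 = n + 2 then 0
    else if i = n + 1 then
      (izero (n+1) (a+1)) ∘ₗ (iminus n a) ∘ₗ (pzero n a) ∘ₗ (pminus (n+1) a)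
    else
      (iminus (n+1) a) ∘ₗ (XmOp (n+1) a i) ∘ₗ (pminus (n+1) a)
      + (izero (n+1) (a+1)) ∘ₗ (XmOp (n+1) (a+1) i) ∘ₗ (pzero (n+1) (a+1))

/-- The recursively defined action of the generator `K_i` on `V_a^n`.  The middle factors
`diagOp … 1 q` and `diagOp … q⁻¹ 1` are the operators `i₋₁ p₋₁ + q i₀ p₀` and
`q⁻¹ i₋₁ p₋₁ + i₀ p₀` of the recursion. -/
def KOp : (n a i : ℕ) → Module.End A (V n a)
  | 0, _, _ => 1
  | 1, _, _ => 1
  | _+2, 0, _ => 1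
  | n+2, a+1, i =>
    if a + 1 = n + 2 then 1
    else if i = n + 1 then
      (iminus (n+1) a) ∘ₗ (diagOp (n+1) a n 1 qq) ∘ₗ (pminus (n+1) a)
      + (izero (n+1) (a+1)) ∘ₗ (diagOp (n+1) (a+1) n qq⁻¹ 1) ∘ₗ (pzero (n+1) (a+1))
    else
      (iminus (n+1) a) ∘ₗ (KOp (n+1) a i) ∘ₗ (pminus (n+1) a)
      + (izero (n+1) (a+1)) ∘ₗ (KOp (n+1) (a+1) i) ∘ₗ (pzero (n+1) (a+1))

/-- The recursively defined action of `K_i⁻¹` on `V_a^n` (the inverse of `KOp`),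
given by the same recursion with `q` and `q⁻¹` interchanged. -/
def KinvOp : (n a i : ℕ) → Module.End A (V n a)
  | 0, _, _ => 1
  | 1, _, _ => 1
  | _+2, 0, _ => 1
  | n+2, a+1, i =>
    if a + 1 = n + 2 then 1
    else if i = n + 1 then
      (iminus (n+1) a) ∘ₗ (diagOp (n+1) a n 1 qq⁻¹) ∘ₗ (pminus (n+1) a)
      + (izero (n+1) (a+1)) ∘ₗ (diagOp (n+1) (a+1) n qq 1) ∘ₗ (pzero (n+1) (a+1))
    else
      (iminus (n+1) a) ∘ₗ (KinvOp (n+1) a i) ∘ₗ (pminus (n+1) a)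
      + (izero (n+1) (a+1)) ∘ₗ (KinvOp (n+1) (a+1) i) ∘ₗ (pzero (n+1) (a+1))
/-! ### The quantum group `U_q(sl_n)` by generators and relations.

We present the algebra with `m = n - 1` generators of each kind `K i, K i⁻¹, X i⁺, X i⁻`,
indexed by `i : Fin m` (so `i` corresponds to the subscript `i + 1 ∈ {1, …, n-1}`). -/

/-- Generators of `U_q(sl_n)` (with `m = n-1`). -/
inductive UqGen (m : ℕ) : Type
  | K : Fin m → UqGen m
  | Kinv : Fin m → UqGen m
  | Xp : Fin m → UqGen m
  | Xm : Fin m → UqGen m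

/-- The free `𝔸`-algebra on the generators. -/
abbrev FA (m : ℕ) : Type := FreeAlgebra A (UqGen m)

namespace FA
variable {m : ℕ}
def K (i : Fin m) : FA m := FreeAlgebra.ι A (UqGen.K i)
def Kinv (i : Fin m) : FA m := FreeAlgebra.ι A (UqGen.Kinv i)
def Xp (i : Fin m) : FA m := FreeAlgebra.ι A (UqGen.Xp i)
def Xm (i : Fin m) : FA m := FreeAlgebra.ι A (UqGen.Xm i)
end FA

/-- The Cartan integers `(i,j)` of type `A_m`: `2` if `i = j`, `-1` if `|i-j| = 1`,
`0` if `|i-j| ≥ 2`. -/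
def cart {m : ℕ} (i j : Fin m) : ℤ :=
  if i = j then 2 else if (i : ℕ) + 1 = j ∨ (j : ℕ) + 1 = i then -1 else 0

/-- The defining relations of `U_q(sl_n)`. -/
inductive uqRel (m : ℕ) : FA m → FA m → Prop
  | KKinv (i : Fin m) : uqRel m (FA.K i * FA.Kinv i) 1
  | KinvK (i : Fin m) : uqRel m (FA.Kinv i * FA.K i) 1
  | KK (i j : Fin m) : uqRel m (FA.K i * FA.K j) (FA.K j * FA.K i)
  | KXp (i j : Fin m) : uqRel m (FA.K i * FA.Xp j) (qq ^ (cart i j) • (FA.Xp j * FA.K i))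
  | KXm (i j : Fin m) : uqRel m (FA.K i * FA.Xm j) (qq ^ (-cart i j) • (FA.Xm j * FA.K i))
  | XpXm (i j : Fin m) :
      uqRel m (FA.Xp i * FA.Xm j - FA.Xm j * FA.Xp i)
        (if i = j then (qq - qq⁻¹)⁻¹ • (FA.K i - FA.Kinv i) else 0)
  | XpXp (i j : Fin m) (h : (i : ℕ) + 2 ≤ j ∨ (j : ℕ) + 2 ≤ i) :
      uqRel m (FA.Xp i * FA.Xp j) (FA.Xp j * FA.Xp i)
  | XmXm (i j : Fin m) (h : (i : ℕ) + 2 ≤ j ∨ (j : ℕ) + 2 ≤ i) :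
      uqRel m (FA.Xm i * FA.Xm j) (FA.Xm j * FA.Xm i)
  | serreP (i j : Fin m) (h : (i : ℕ) + 1 = j ∨ (j : ℕ) + 1 = i) :
      uqRel m (FA.Xp i ^ 2 * FA.Xp j - (qq + qq⁻¹) • (FA.Xp i * FA.Xp j * FA.Xp i)
        + FA.Xp j * FA.Xp i ^ 2) 0
  | serreM (i j : Fin m) (h : (i : ℕ) + 1 = j ∨ (j : ℕ) + 1 = i) :
      uqRel m (FA.Xm i ^ 2 * FA.Xm j - (qq + qq⁻¹) • (FA.Xm i * FA.Xm j * FA.Xm i)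
        + FA.Xm j * FA.Xm i ^ 2) 0

/-- The quantum group `U_q(sl_{m+1})`, presented by generators and relations.
For `U_q(sl_n)` take `m = n - 1`. -/
abbrev Uq (m : ℕ) : Type := RingQuot (uqRel m)

namespace Uq
variable {m : ℕ}
/-- The generator `K_{i+1}` of `U_q(sl_n)`. -/
def K (i : Fin m) : Uq m := RingQuot.mkAlgHom A (uqRel m) (FA.K i)
/-- The generator `K_{i+1}⁻¹` of `U_q(sl_n)`. -/
def Kinv (i : Fin m) : Uq m := RingQuot.mkAlgHom A (uqRel m) (FA.Kinv i)
/-- The generator `X_{i+1}^+` of `U_q(sl_n)`. -/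
def Xp (i : Fin m) : Uq m := RingQuot.mkAlgHom A (uqRel m) (FA.Xp i)
/-- The generator `X_{i+1}^-` of `U_q(sl_n)`. -/
def Xm (i : Fin m) : Uq m := RingQuot.mkAlgHom A (uqRel m) (FA.Xm i)
end Uq
/-! ### The duality maps `d_{a,n}`, triple invariants, and the pivotal elements `τ`. -/

/-- The sum-of-coefficients functional on `V_a^n`. -/
def sumF (n a : ℕ) : V n a →ₗ[A] A where
  toFun f := ∑ s : BS n a, f s
  map_add' f g := by simp [Finset.sum_add_distrib]
  map_smul' c f := by simp [Finset.mul_sum]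

/-- The "trivial" map `V_a^n → (V_c^n)^*`; when `V_a^n` and `V_c^n` are one-dimensional
(`a = 0` or `a = n`, and correspondingly for `c`) it sends the basis vector to the dual
basis vector.  Used for the base cases of `d_{a,n}`. -/
def dtriv (n a c : ℕ) : V n a →ₗ[A] Module.Dual A (V n c) :=
  LinearMap.smulRight (sumF n a) (sumF n c)

/-- The map `d_{a,n} : V_a^n → (V_{n-a}^n)^*`, defined recursively by
`d_{a,n} = i₀ ∘ d_{a-1,n-1} ∘ p₋₁ + (-q)^{-a} i₋₁ ∘ d_{a,n-1} ∘ p₀`, with both base cases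
sending the basis vector to the dual basis vector.  Here `dmap n a c` has target
`(V_c^n)^*`, to be used with `c = n - a`. -/
def dmap : (n a c : ℕ) → (V n a →ₗ[A] Module.Dual A (V n c))
  | 0, a, c => dtriv 0 a c
  | n+1, 0, c => dtriv (n+1) 0 c
  | n+1, a+1, c =>
    if a + 1 = n + 1 then dtriv (n+1) (a+1) c
    else
      match c with
      | 0 => 0
      | c+1 =>
        (pzero n (c+1)).dualMap ∘ₗ (dmap n a (c+1)) ∘ₗ (pminus n a)
        + ((-qq) ^ (a+1))⁻¹ •
            ((pminus n c).dualMap ∘ₗ (dmap n (a+1) c) ∘ₗ (pzero n (a+1)))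

section voutvin

open TensorProduct

/-- First term of the recursion for `v_out`: `(-1)^c q^{b+c} (i₋₁ ⊗ i₀ ⊗ i₀)`. -/
def vterm1 (n a b c : ℕ) (v : V n a ⊗[A] (V n b ⊗[A] V n c)) :
    V (n+1) (a+1) ⊗[A] (V (n+1) b ⊗[A] V (n+1) c) :=
  ((-1 : A)^c * qq^(b+c)) •
    (TensorProduct.map (iminus n a) (TensorProduct.map (izero n b) (izero n c)) v)

/-- Second term of the recursion for `v_out`: `(-1)^a q^c (i₀ ⊗ i₋₁ ⊗ i₀)`. -/
def vterm2 (n a b c : ℕ) (v : V n a ⊗[A] (V n b ⊗[A] V n c)) :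
    V (n+1) a ⊗[A] (V (n+1) (b+1) ⊗[A] V (n+1) c) :=
  ((-1 : A)^a * qq^c) •
    (TensorProduct.map (izero n a) (TensorProduct.map (iminus n b) (izero n c)) v)

/-- Third term of the recursion for `v_out`: `(-1)^b (i₀ ⊗ i₀ ⊗ i₋₁)`. -/
def vterm3 (n a b c : ℕ) (v : V n a ⊗[A] (V n b ⊗[A] V n c)) :
    V (n+1) a ⊗[A] (V (n+1) b ⊗[A] V (n+1) (c+1)) :=
  ((-1 : A)^b) •
    (TensorProduct.map (izero n a) (TensorProduct.map (izero n b) (iminus n c)) v)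

/-- The triple invariant `v_out^n_{a,b,c} ∈ V_a^n ⊗ V_b^n ⊗ V_c^n` (intended for
`a + b + c = n`), defined by the recursion of Definition `defn:trivalent-vertices`,
omitting any term with a negative subscript. -/
def voutE : (n a b c : ℕ) → V n a ⊗[A] (V n b ⊗[A] V n c)
  | 0, _, _, _ => (fun _ => (1:A)) ⊗ₜ[A] ((fun _ => (1:A)) ⊗ₜ[A] (fun _ => (1:A)))
  | n+1, 0, 0, 0 => 0
  | n+1, a+1, 0, 0 => vterm1 n a 0 0 (voutE n a 0 0)
  | n+1, 0, b+1, 0 => vterm2 n 0 b 0 (voutE n 0 b 0)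
  | n+1, 0, 0, c+1 => vterm3 n 0 0 c (voutE n 0 0 c)
  | n+1, a+1, b+1, 0 =>
      vterm1 n a (b+1) 0 (voutE n a (b+1) 0) + vterm2 n (a+1) b 0 (voutE n (a+1) b 0)
  | n+1, a+1, 0, c+1 =>
      vterm1 n a 0 (c+1) (voutE n a 0 (c+1)) + vterm3 n (a+1) 0 c (voutE n (a+1) 0 c)
  | n+1, 0, b+1, c+1 =>
      vterm2 n 0 b (c+1) (voutE n 0 b (c+1)) + vterm3 n 0 (b+1) c (voutE n 0 (b+1) c)
  | n+1, a+1, b+1, c+1 =>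
      vterm1 n a (b+1) (c+1) (voutE n a (b+1) (c+1))
      + vterm2 n (a+1) b (c+1) (voutE n (a+1) b (c+1))
      + vterm3 n (a+1) (b+1) c (voutE n (a+1) (b+1) c)

/-- First term of the recursion for `v_in`: `(-1)^c (…) ∘ (p₋₁ ⊗ p₀ ⊗ p₀)`. -/
def wterm1 (n a b c : ℕ) (φ : V n a ⊗[A] (V n b ⊗[A] V n c) →ₗ[A] A) :
    V (n+1) (a+1) ⊗[A] (V (n+1) b ⊗[A] V (n+1) c) →ₗ[A] A :=
  ((-1 : A)^c) •
    (φ ∘ₗ TensorProduct.map (pminus n a) (TensorProduct.map (pzero n b) (pzero n c)))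

/-- Second term of the recursion for `v_in`: `(-1)^a q^{-a} (…) ∘ (p₀ ⊗ p₋₁ ⊗ p₀)`. -/
def wterm2 (n a b c : ℕ) (φ : V n a ⊗[A] (V n b ⊗[A] V n c) →ₗ[A] A) :
    V (n+1) a ⊗[A] (V (n+1) (b+1) ⊗[A] V (n+1) c) →ₗ[A] A :=
  ((-1 : A)^a * (qq^a)⁻¹) •
    (φ ∘ₗ TensorProduct.map (pzero n a) (TensorProduct.map (pminus n b) (pzero n c)))

/-- Third term of the recursion for `v_in`: `(-1)^b q^{-a-b} (…) ∘ (p₀ ⊗ p₀ ⊗ p₋₁)`. -/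
def wterm3 (n a b c : ℕ) (φ : V n a ⊗[A] (V n b ⊗[A] V n c) →ₗ[A] A) :
    V (n+1) a ⊗[A] (V (n+1) b ⊗[A] V (n+1) (c+1)) →ₗ[A] A :=
  ((-1 : A)^b * (qq^(a+b))⁻¹) •
    (φ ∘ₗ TensorProduct.map (pzero n a) (TensorProduct.map (pzero n b) (pminus n c)))

/-- The triple coinvariant `v_in^n_{a,b,c} : V_a^n ⊗ V_b^n ⊗ V_c^n → 𝔸` (intended for
`a + b + c = n`), defined recursively, omitting any term with a negative subscript. -/
def vinE : (n a b c : ℕ) → (V n a ⊗[A] (V n b ⊗[A] V n c) →ₗ[A] A)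
  | 0, a, b, c =>
      (LinearMap.mul' A A) ∘ₗ
        TensorProduct.map (sumF 0 a)
          ((LinearMap.mul' A A) ∘ₗ TensorProduct.map (sumF 0 b) (sumF 0 c))
  | n+1, 0, 0, 0 => 0
  | n+1, a+1, 0, 0 => wterm1 n a 0 0 (vinE n a 0 0)
  | n+1, 0, b+1, 0 => wterm2 n 0 b 0 (vinE n 0 b 0)
  | n+1, 0, 0, c+1 => wterm3 n 0 0 c (vinE n 0 0 c)
  | n+1, a+1, b+1, 0 =>
      wterm1 n a (b+1) 0 (vinE n a (b+1) 0) + wterm2 n (a+1) b 0 (vinE n (a+1) b 0)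
  | n+1, a+1, 0, c+1 =>
      wterm1 n a 0 (c+1) (vinE n a 0 (c+1)) + wterm3 n (a+1) 0 c (vinE n (a+1) 0 c)
  | n+1, 0, b+1, c+1 =>
      wterm2 n 0 b (c+1) (vinE n 0 b (c+1)) + wterm3 n 0 (b+1) c (vinE n 0 (b+1) c)
  | n+1, a+1, b+1, c+1 =>
      wterm1 n a (b+1) (c+1) (vinE n a (b+1) (c+1))
      + wterm2 n (a+1) b (c+1) (vinE n (a+1) b (c+1))
      + wterm3 n (a+1) (b+1) c (vinE n (a+1) (b+1) c)

end voutvin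

/-- The operator `∏_{j=1}^{n-1} K_j^j` on `V_a^n`. -/
def kjOp (n a : ℕ) : Module.End A (V n a) :=
  (List.ofFn fun i : Fin (n-1) => (KOp n a ((i : ℕ)+1)) ^ ((i : ℕ)+1)).prod

/-- The pivotal operator `τ_n = ∏_{j=1}^{n-1} K_j^{j(n-j)}` on `V_a^n`. -/
def tauOp (n a : ℕ) : Module.End A (V n a) :=
  (List.ofFn fun i : Fin (n-1) => (KOp n a ((i : ℕ)+1)) ^ (((i : ℕ)+1) * (n - ((i : ℕ)+1)))).prod

/-- The inverse pivotal operator `τ_n⁻¹ = ∏_{j=1}^{n-1} K_j^{-j(n-j)}` on `V_a^n`. -/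
def tauinvOp (n a : ℕ) : Module.End A (V n a) :=
  (List.ofFn fun i : Fin (n-1) => (KinvOp n a ((i : ℕ)+1)) ^ (((i : ℕ)+1) * (n - ((i : ℕ)+1)))).prod

/-- The element `τ_n = ∏_{j=1}^{n-1} K_j^{j(n-j)} ∈ U_q(sl_n)`. -/
def tauU (n : ℕ) : Uq (n-1) :=
  (List.ofFn fun i : Fin (n-1) => (Uq.K i) ^ (((i : ℕ)+1) * (n - ((i : ℕ)+1)))).prod

/-- The Cartan integers for literal subscripts `i, j ∈ {1, …, n-1}`. -/
lemma qq_ne : qq ≠ 0 := RatFunc.X_ne_zero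

lemma hq_ne : qq - qq⁻¹ ≠ 0 := by
  intro h
  have h0 := sub_eq_zero.mp h
  have h1 : qq * qq = 1 := by
    nth_rewrite 1 [h0]
    exact inv_mul_cancel₀ qq_ne
  have h2 : RatFunc.intDegree (qq * qq) = 2 := by
    rw [RatFunc.intDegree_mul qq_ne qq_ne]
    simp [qq]
  rw [h1] at h2
  simp at h2


def cartN (i j : ℕ) : ℤ :=
  if i = j then 2 else if i + 1 = j ∨ j + 1 = i then -1 else 0

/-- for every `n ≥ 2` and `0 ≤ a ≤ n`, the recursively defined operators
on `V_a^n` satisfy `X_{n-1}⁺ X_{n-1}⁻ - X_{n-1}⁻ X_{n-1}⁺ = (K_{n-1} - K_{n-1}⁻¹)/(q - q⁻¹)`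
as endomorphisms of `V_a^n`. -/
theorem statement4 (n : ℕ) (hn : 2 ≤ n) (a : ℕ) (ha : a ≤ n) :
    XpOp n a (n-1) * XmOp n a (n-1) - XmOp n a (n-1) * XpOp n a (n-1)
      = (qq - qq⁻¹)⁻¹ • (KOp n a (n-1) - KinvOp n a (n-1)) := by
  obtain ⟨m, rfl⟩ : ∃ m, n = m + 2 := ⟨n - 2, by omega⟩
  have hn1 : m + 2 - 1 = m + 1 := by omega
  rw [hn1]
  rcases a with _ | b
  · simp [XpOp, XmOp, KOp, KinvOp]
  by_cases hb : b + 1 = m + 2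
  · simp only [XpOp, XmOp, KOp, KinvOp, if_pos hb]
    simp
  · have hXp : XpOp (m+2) (b+1) (m+1)
        = (iminus (m+1) b) ∘ₗ (izero m b) ∘ₗ (pminus m b) ∘ₗ (pzero (m+1) (b+1)) := by
      simp only [XpOp]; rw [if_neg hb]; rw [if_true]
    have hXm : XmOp (m+2) (b+1) (m+1)
        = (izero (m+1) (b+1)) ∘ₗ (iminus m b) ∘ₗ (pzero m b) ∘ₗ (pminus (m+1) b) := by
      simp only [XmOp]; rw [if_neg hb]; rw [if_true]
    have hK : KOp (m+2) (b+1) (m+1)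
        = (iminus (m+1) b) ∘ₗ (diagOp (m+1) b m 1 qq) ∘ₗ (pminus (m+1) b)
          + (izero (m+1) (b+1)) ∘ₗ (diagOp (m+1) (b+1) m qq⁻¹ 1) ∘ₗ (pzero (m+1) (b+1)) := by
      simp only [KOp]; rw [if_neg hb]; rw [if_true]
    have hKi : KinvOp (m+2) (b+1) (m+1)
        = (iminus (m+1) b) ∘ₗ (diagOp (m+1) b m 1 qq⁻¹) ∘ₗ (pminus (m+1) b)
          + (izero (m+1) (b+1)) ∘ₗ (diagOp (m+1) (b+1) m qq 1) ∘ₗ (pzero (m+1) (b+1)) := by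
      simp only [KinvOp]; rw [if_neg hb]; rw [if_true]
    have harith2 : ∀ x : A, (qq - qq⁻¹)⁻¹ * (qq * x - qq⁻¹ * x) = x := fun x => by
      rw [← sub_mul, inv_mul_cancel_left₀ hq_ne]
    have harith3 : ∀ x : A, (qq - qq⁻¹)⁻¹ * (qq⁻¹ * x - qq * x) = -x := fun x => by
      rw [show qq⁻¹ * x - qq * x = (qq - qq⁻¹) * (-x) from by ring,
        inv_mul_cancel_left₀ hq_ne]
    rw [hXp, hXm, hK, hKi]
    refine LinearMap.ext fun f => funext fun s => ?_
    have hmm : ¬ ((m : ℕ) + 1 = m) := by omega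
    have hfalse : (m = m + 1) ↔ False := iff_false_intro (by omega)
    simp only [Module.End.mul_apply, LinearMap.sub_apply, LinearMap.smul_apply,
      LinearMap.add_apply, LinearMap.comp_apply, iminus, izero, pminus, pzero, diagOp,
      LinearMap.coe_mk, AddHom.coe_mk, Pi.sub_apply, Pi.smul_apply, Pi.add_apply,
      smul_eq_mul]
    by_cases h1 : m + 1 ∈ s.1 <;> by_cases h0 : m ∈ s.1 <;>
      simp only [h1, h0, hfalse, not_false_iff, dite_true, dite_false, if_true, if_false,
        Finset.mem_insert, Finset.mem_erase, ne_eq, hmm, not_false_eq_true, and_true, true_and,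
        and_false, false_and, or_false, false_or, true_or, or_true, not_true, Pi.zero_apply,
        mul_zero, zero_mul, sub_zero, zero_sub, add_zero, zero_add, one_mul, sub_self,
        neg_zero, Pi.sub_apply, Pi.smul_apply, smul_eq_mul, Finset.erase_insert, Finset.insert_erase]
    · simp only [harith2]
    · simp only [harith3]


end
end

section
/- For every n ≥ 3 and 0 ≤ a ≤ n, the recursively defined operators on V_a^n satisfy K_{n−1} X_{n−1}^+ = q² X_{n−1}^+ K_{n−1}, K_{n−1} X_{n−1}^- = q^{-2} X_{n−1}^- K_{n−1}, K_{n−2} X_{n−1}^+ = q^{-1} X_{n−1}^+ K_{n−2}, K_{n−2} X_{n−1}^- = q X_{n−1}^- K_{n−2}, K_{n−1} X_{n−2}^+ = q^{-1} X_{n−2}^+ K_{n−1}, and K_{n−1} X_{n−2}^- = q X_{n−2}^- K_{n−1} as endomorphisms of V_a^n. -/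
noncomputable section

open scoped TensorProduct

set_option maxHeartbeats 1000000
set_option synthInstance.maxHeartbeats 400000

-- ===== auxiliary development =====

lemma qq_ne_zero : (qq : A) ≠ 0 := RatFunc.X_ne_zero

/-- Explicit diagonal form of `K` with literal indices `k+1, k`. -/
def Kd (n a k : ℕ) : Module.End A (V n a) where
  toFun f s := ((if k+1 ∈ s.1 then qq else 1) * (if k ∈ s.1 then qq⁻¹ else 1)) * f s
  map_add' f g := by funext s; simp only [Pi.add_apply]; ring
  map_smul' c f := by
    funext s; simp only [Pi.smul_apply, smul_eq_mul, RingHom.id_apply]; ring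

/-- Explicit form of `X^+` with literal indices `k+1, k`. -/
def Xpd (n a k : ℕ) : Module.End A (V n a) where
  toFun f s := if h : k+1 ∈ s.1 ∧ k ∉ s.1 then
      f ⟨insert k (s.1.erase (k+1)), by
        have hk : k + 1 < n := Finset.mem_range.mp (s.2.1 h.1)
        have hpos : 0 < a := s.2.2 ▸ Finset.card_pos.mpr ⟨k+1, h.1⟩
        refine ⟨fun x hx => ?_, ?_⟩
        · rcases Finset.mem_insert.mp hx with rfl | hx
          · exact Finset.mem_range.mpr (by omega)
          · exact s.2.1 (Finset.mem_of_mem_erase hx)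
        · rw [Finset.card_insert_of_notMem (by simp [Finset.mem_erase, h.2]),
            Finset.card_erase_of_mem h.1, s.2.2]
          omega⟩
    else 0
  map_add' f g := by
    funext s
    by_cases h : k+1 ∈ s.1 ∧ k ∉ s.1 <;> simp [h]
  map_smul' c f := by
    funext s
    by_cases h : k+1 ∈ s.1 ∧ k ∉ s.1 <;> simp [h]

/-- Explicit form of `X^-` with literal indices `k+1, k`. -/
def Xmd (n a k : ℕ) (hkn : k + 1 < n) : Module.End A (V n a) where
  toFun f s := if h : k ∈ s.1 ∧ k+1 ∉ s.1 then
      f ⟨insert (k+1) (s.1.erase k), by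
        have hpos : 0 < a := s.2.2 ▸ Finset.card_pos.mpr ⟨k, h.1⟩
        refine ⟨fun x hx => ?_, ?_⟩
        · rcases Finset.mem_insert.mp hx with rfl | hx
          · exact Finset.mem_range.mpr hkn
          · exact s.2.1 (Finset.mem_of_mem_erase hx)
        · rw [Finset.card_insert_of_notMem (by simp [Finset.mem_erase, h.2]),
            Finset.card_erase_of_mem h.1, s.2.2]
          omega⟩
    else 0
  map_add' f g := by
    funext s
    by_cases h : k ∈ s.1 ∧ k+1 ∉ s.1 <;> simp [h]
  map_smul' c f := by
    funext s
    by_cases h : k ∈ s.1 ∧ k+1 ∉ s.1 <;> simp [h]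

lemma ne_succ (k : ℕ) : k ≠ k + 1 := by omega

lemma BS_zero_empty {n : ℕ} (s : BS n 0) : s.1 = ∅ := Finset.card_eq_zero.mp s.2.2

lemma BS_full {n : ℕ} (s : BS n n) : s.1 = Finset.range n :=
  Finset.eq_of_subset_of_card_le s.2.1 (by rw [s.2.2, Finset.card_range])

lemma Ktop (m b : ℕ) : KOp (m+2) b (m+1) = Kd (m+2) b m := by
  refine LinearMap.ext fun f => funext fun s => ?_
  cases b with
  | zero =>
    have hs := BS_zero_empty s
    simp [KOp, Kd, hs, Module.End.one_apply]
  | succ b =>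
    by_cases hb : b = m + 1
    · subst hb
      have hs : s.1 = Finset.range (m+2) := BS_full s
      simp [KOp, Kd, hs, Finset.mem_range, Module.End.one_apply,
        mul_inv_cancel₀ qq_ne_zero]
    · have hne : m ≠ m + 1 := ne_succ m
      simp only [KOp, if_true]
      rw [if_neg (show ¬ (b+1 = m+2) by omega)]
      by_cases h1 : m + 1 ∈ s.1
      · by_cases h2 : m ∈ s.1 <;>
          simp [Kd, iminus, izero, pminus, pzero, diagOp, h1, h2, Finset.mem_erase, hne,
            Subtype.coe_eta, Finset.insert_erase h1, mul_inv_cancel₀ qq_ne_zero]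
      · by_cases h2 : m ∈ s.1 <;>
          simp [Kd, iminus, izero, pminus, pzero, diagOp, h1, h2, Finset.mem_erase, hne,
            Subtype.coe_eta]

lemma Xptop (m b : ℕ) : XpOp (m+2) b (m+1) = Xpd (m+2) b m := by
  refine LinearMap.ext fun f => funext fun s => ?_
  cases b with
  | zero =>
    have hs := BS_zero_empty s
    simp [XpOp, Xpd, hs]
  | succ b =>
    by_cases hb : b = m + 1
    · subst hb
      have hs : s.1 = Finset.range (m+2) := BS_full s
      simp [XpOp, Xpd, hs, Finset.mem_range]
    · have hne : m ≠ m + 1 := ne_succ m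
      simp only [XpOp, if_true]
      rw [if_neg (show ¬ (b+1 = m+2) by omega)]
      by_cases h1 : m + 1 ∈ s.1
      · by_cases h2 : m ∈ s.1 <;>
          simp [Xpd, iminus, izero, pminus, pzero, h1, h2, Finset.mem_erase, hne]
      · by_cases h2 : m ∈ s.1 <;>
          simp [Xpd, iminus, izero, pminus, pzero, h1, h2, Finset.mem_erase, hne]

lemma Xmtop (m b : ℕ) : XmOp (m+2) b (m+1) = Xmd (m+2) b m (by omega) := by
  refine LinearMap.ext fun f => funext fun s => ?_
  cases b with
  | zero =>
    have hs := BS_zero_empty s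
    simp [XmOp, Xmd, hs]
  | succ b =>
    by_cases hb : b = m + 1
    · subst hb
      have hs : s.1 = Finset.range (m+2) := BS_full s
      simp [XmOp, Xmd, hs, Finset.mem_range]
    · have hne : m ≠ m + 1 := ne_succ m
      simp only [XmOp, if_true]
      rw [if_neg (show ¬ (b+1 = m+2) by omega)]
      by_cases h1 : m + 1 ∈ s.1
      · by_cases h2 : m ∈ s.1 <;>
          simp [Xmd, iminus, izero, pminus, pzero, h1, h2, Finset.mem_erase, hne]
      · by_cases h2 : m ∈ s.1 <;>
          simp [Xmd, iminus, izero, pminus, pzero, h1, h2, Finset.mem_erase, hne]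

lemma insert_shuffle (s : Finset ℕ) {j u v : ℕ} (hj : j ∈ s) (hju : j ≠ u) (hjv : j ≠ v) :
    insert j (insert u ((s.erase j).erase v)) = insert u (s.erase v) := by
  ext x
  simp only [Finset.mem_insert, Finset.mem_erase]
  constructor
  · rintro (rfl | rfl | ⟨h1, h2, h3⟩)
    · exact Or.inr ⟨hjv, hj⟩
    · exact Or.inl rfl
    · exact Or.inr ⟨h1, h3⟩
  · rintro (rfl | ⟨h1, h2⟩)
    · exact Or.inr (Or.inl rfl)
    · by_cases hx : x = j
      · exact Or.inl hx
      · exact Or.inr (Or.inr ⟨h1, hx, h2⟩)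

lemma KOp_mid_eq (m b : ℕ) (hb : ¬ b + 1 = m + 3) :
    KOp (m+3) (b+1) (m+1) =
      iminus (m+2) b ∘ₗ KOp (m+2) b (m+1) ∘ₗ pminus (m+2) b
      + izero (m+2) (b+1) ∘ₗ KOp (m+2) (b+1) (m+1) ∘ₗ pzero (m+2) (b+1) := by
  have e2 : ¬ (m+1 = m+2) := by omega
  simp only [KOp, if_neg hb, if_neg e2]

lemma XpOp_mid_eq (m b : ℕ) (hb : ¬ b + 1 = m + 3) :
    XpOp (m+3) (b+1) (m+1) =
      iminus (m+2) b ∘ₗ XpOp (m+2) b (m+1) ∘ₗ pminus (m+2) b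
      + izero (m+2) (b+1) ∘ₗ XpOp (m+2) (b+1) (m+1) ∘ₗ pzero (m+2) (b+1) := by
  have e2 : ¬ (m+1 = m+2) := by omega
  simp only [XpOp, if_neg hb, if_neg e2]

lemma XmOp_mid_eq (m b : ℕ) (hb : ¬ b + 1 = m + 3) :
    XmOp (m+3) (b+1) (m+1) =
      iminus (m+2) b ∘ₗ XmOp (m+2) b (m+1) ∘ₗ pminus (m+2) b
      + izero (m+2) (b+1) ∘ₗ XmOp (m+2) (b+1) (m+1) ∘ₗ pzero (m+2) (b+1) := by
  have e2 : ¬ (m+1 = m+2) := by omega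
  simp only [XmOp, if_neg hb, if_neg e2]

lemma Kmid (m a : ℕ) (ha : a ≤ m + 3) : KOp (m+3) a (m+1) = Kd (m+3) a m := by
  refine LinearMap.ext fun f => funext fun s => ?_
  cases a with
  | zero =>
    have hs := BS_zero_empty s
    simp [KOp, Kd, hs, Module.End.one_apply]
  | succ b =>
    by_cases hb : b = m + 2
    · subst hb
      have hs : s.1 = Finset.range (m+3) := BS_full s
      simp [KOp, Kd, hs, Finset.mem_range, Module.End.one_apply,
        mul_inv_cancel₀ qq_ne_zero]
    · have e1 : ¬ (b+1 = m+3) := by omega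
      have e2 : ¬ (m+1 = m+2) := by omega
      have hne1 : m ≠ m + 2 := by omega
      have hne2 : m + 1 ≠ m + 2 := by omega
      rw [KOp_mid_eq m b e1, Ktop m b, Ktop m (b+1)]
      by_cases h : m + 2 ∈ s.1
      · simp [Kd, iminus, izero, pminus, pzero, h, Finset.mem_erase, hne1, hne2,
          Subtype.coe_eta, Finset.insert_erase h]
      · simp [Kd, iminus, izero, pminus, pzero, h, Finset.mem_erase, hne1, hne2,
          Subtype.coe_eta]

lemma Xpmid (m a : ℕ) (ha : a ≤ m + 3) : XpOp (m+3) a (m+1) = Xpd (m+3) a m := by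
  refine LinearMap.ext fun f => funext fun s => ?_
  cases a with
  | zero =>
    have hs := BS_zero_empty s
    simp [XpOp, Xpd, hs]
  | succ b =>
    by_cases hb : b = m + 2
    · subst hb
      have hs : s.1 = Finset.range (m+3) := BS_full s
      simp [XpOp, Xpd, hs, Finset.mem_range]
    · have e1 : ¬ (b+1 = m+3) := by omega
      have e2 : ¬ (m+1 = m+2) := by omega
      have hne1 : m ≠ m + 2 := by omega
      have hne2 : m + 1 ≠ m + 2 := by omega
      rw [XpOp_mid_eq m b e1, Xptop m b, Xptop m (b+1)]
      by_cases h : m + 2 ∈ s.1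
      · simp [Xpd, iminus, izero, pminus, pzero, h, Finset.mem_erase, hne1, hne2,
          Subtype.coe_eta,
          insert_shuffle s.1 h (show m+2 ≠ m by omega) (show m+2 ≠ m+1 by omega)]
      · simp [Xpd, iminus, izero, pminus, pzero, h, Finset.mem_erase, hne1, hne2,
          Subtype.coe_eta]

lemma Xmmid (m a : ℕ) (ha : a ≤ m + 3) : XmOp (m+3) a (m+1) = Xmd (m+3) a m (by omega) := by
  refine LinearMap.ext fun f => funext fun s => ?_
  cases a with
  | zero =>
    have hs := BS_zero_empty s
    simp [XmOp, Xmd, hs]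
  | succ b =>
    by_cases hb : b = m + 2
    · subst hb
      have hs : s.1 = Finset.range (m+3) := BS_full s
      simp [XmOp, Xmd, hs, Finset.mem_range]
    · have e1 : ¬ (b+1 = m+3) := by omega
      have e2 : ¬ (m+1 = m+2) := by omega
      have hne1 : m ≠ m + 2 := by omega
      have hne2 : m + 1 ≠ m + 2 := by omega
      rw [XmOp_mid_eq m b e1, Xmtop m b, Xmtop m (b+1)]
      by_cases h : m + 2 ∈ s.1
      · simp [Xmd, iminus, izero, pminus, pzero, h, Finset.mem_erase, hne1, hne2,
          Subtype.coe_eta,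
          insert_shuffle s.1 h (show m+2 ≠ m+1 by omega) (show m+2 ≠ m by omega)]
      · simp [Xmd, iminus, izero, pminus, pzero, h, Finset.mem_erase, hne1, hne2,
          Subtype.coe_eta]

lemma R1 (n a k : ℕ) : Kd n a k * Xpd n a k = (qq ^ 2 : A) • (Xpd n a k * Kd n a k) := by
  refine LinearMap.ext fun f => funext fun s => ?_
  simp only [Module.End.mul_apply, LinearMap.smul_apply, Pi.smul_apply, smul_eq_mul,
    Kd, Xpd, LinearMap.coe_mk, AddHom.coe_mk]
  by_cases h : k + 1 ∈ s.1 ∧ k ∉ s.1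
  · simp only [dif_pos h, if_pos h.1, if_neg h.2, Finset.mem_insert, Finset.mem_erase,
      mul_ite, mul_one, mul_zero]
    simp [ne_succ k, h.1, h.2, show ¬ (1 + k = k) by omega, show ¬ (k = 1 + k) by omega,
      show ¬ (1 + k = k + 1 + 1) by omega]
    first
      | rfl
      | (refine Or.inl ?_; field_simp [qq_ne_zero]; try ring)
      | (field_simp [qq_ne_zero]; try ring)
  · simp [dif_neg h]

lemma R2 (n a k : ℕ) (hkn : k + 1 < n) :
    Kd n a k * Xmd n a k hkn = ((qq ^ 2 : A))⁻¹ • (Xmd n a k hkn * Kd n a k) := by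
  refine LinearMap.ext fun f => funext fun s => ?_
  simp only [Module.End.mul_apply, LinearMap.smul_apply, Pi.smul_apply, smul_eq_mul,
    Kd, Xmd, LinearMap.coe_mk, AddHom.coe_mk]
  by_cases h : k ∈ s.1 ∧ k + 1 ∉ s.1
  · simp only [dif_pos h, if_pos h.1, if_neg h.2, Finset.mem_insert, Finset.mem_erase,
      mul_ite, mul_one, mul_zero]
    simp [ne_succ k, h.1, h.2, show ¬ (1 + k = k) by omega, show ¬ (k = 1 + k) by omega,
      show ¬ (1 + k = k + 1 + 1) by omega]
    first
      | rfl
      | (refine Or.inl ?_; field_simp [qq_ne_zero]; try ring)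
      | (field_simp [qq_ne_zero]; try ring)
  · simp [dif_neg h]

lemma R3 (n a k : ℕ) :
    Kd n a k * Xpd n a (k+1) = qq⁻¹ • (Xpd n a (k+1) * Kd n a k) := by
  have e1 : k ≠ k + 1 := by omega
  have e2 : k ≠ k + 2 := by omega
  have e3 : k + 1 ≠ k + 2 := by omega
  have e4 : ¬ (1 + k = k) := by omega
  have e5 : ¬ (2 + k = k) := by omega
  have e6 : ¬ (2 + k = k + 1) := by omega
  have e7 : ¬ (1 + k = k + 2) := by omega
  have e8 : ¬ (k + 1 = k) := by omega
  have e9 : ¬ (k + 2 = k) := by omega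
  have e10 : ¬ (k + 2 = k + 1) := by omega
  have e11 : ¬ (1 + k = k + 1 + 1) := by omega
  have e12 : ¬ (k = 1 + k) := by omega
  have e13 : ¬ (k = 2 + k) := by omega
  have e14 : ¬ (k + 1 = 2 + k) := by omega
  refine LinearMap.ext fun f => funext fun s => ?_
  simp only [Module.End.mul_apply, LinearMap.smul_apply, Pi.smul_apply, smul_eq_mul,
    Kd, Xpd, LinearMap.coe_mk, AddHom.coe_mk]
  by_cases h : k + 1 + 1 ∈ s.1 ∧ k + 1 ∉ s.1
  · simp only [dif_pos h, Finset.mem_insert, Finset.mem_erase]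
    simp [e1, e2, e3, e4, e5, e6, e7, e8, e9, e10, e11, e12, e13, e14, h.1, h.2]
    by_cases hk : k ∈ s.1 <;>
      simp [hk, e1, e2, e3, e4, e5, e6, e7, e8, e9, e10, e11, e12, e13, e14] <;>
      first
      | rfl
      | (refine Or.inl ?_; field_simp [qq_ne_zero]; try ring)
      | (field_simp [qq_ne_zero]; try ring)
  · simp [dif_neg h]

lemma R4 (n a k : ℕ) (hkn : k + 2 < n) :
    Kd n a k * Xmd n a (k+1) hkn = qq • (Xmd n a (k+1) hkn * Kd n a k) := by
  have e1 : k ≠ k + 1 := by omega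
  have e2 : k ≠ k + 2 := by omega
  have e3 : k + 1 ≠ k + 2 := by omega
  have e4 : ¬ (1 + k = k) := by omega
  have e5 : ¬ (2 + k = k) := by omega
  have e6 : ¬ (2 + k = k + 1) := by omega
  have e7 : ¬ (1 + k = k + 2) := by omega
  have e8 : ¬ (k + 1 = k) := by omega
  have e9 : ¬ (k + 2 = k) := by omega
  have e10 : ¬ (k + 2 = k + 1) := by omega
  have e11 : ¬ (1 + k = k + 1 + 1) := by omega
  have e12 : ¬ (k = 1 + k) := by omega
  have e13 : ¬ (k = 2 + k) := by omega
  have e14 : ¬ (k + 1 = 2 + k) := by omega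
  refine LinearMap.ext fun f => funext fun s => ?_
  simp only [Module.End.mul_apply, LinearMap.smul_apply, Pi.smul_apply, smul_eq_mul,
    Kd, Xmd, LinearMap.coe_mk, AddHom.coe_mk]
  by_cases h : k + 1 ∈ s.1 ∧ k + 1 + 1 ∉ s.1
  · simp only [dif_pos h, Finset.mem_insert, Finset.mem_erase]
    simp [e1, e2, e3, e4, e5, e6, e7, e8, e9, e10, e11, e12, e13, e14, h.1, h.2]
    by_cases hk : k ∈ s.1 <;>
      simp [hk, e1, e2, e3, e4, e5, e6, e7, e8, e9, e10, e11, e12, e13, e14] <;>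
      first
      | rfl
      | (refine Or.inl ?_; field_simp [qq_ne_zero]; try ring)
      | (field_simp [qq_ne_zero]; try ring)
  · simp [dif_neg h]

lemma R5 (n a k : ℕ) :
    Kd n a (k+1) * Xpd n a k = qq⁻¹ • (Xpd n a k * Kd n a (k+1)) := by
  have e1 : k ≠ k + 1 := by omega
  have e2 : k ≠ k + 2 := by omega
  have e3 : k + 1 ≠ k + 2 := by omega
  have e4 : ¬ (1 + k = k) := by omega
  have e5 : ¬ (2 + k = k) := by omega
  have e6 : ¬ (2 + k = k + 1) := by omega
  have e7 : ¬ (1 + k = k + 2) := by omega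
  have e8 : ¬ (k + 1 = k) := by omega
  have e9 : ¬ (k + 2 = k) := by omega
  have e10 : ¬ (k + 2 = k + 1) := by omega
  have e11 : ¬ (1 + k = k + 1 + 1) := by omega
  have e12 : ¬ (k = 1 + k) := by omega
  have e13 : ¬ (k = 2 + k) := by omega
  have e14 : ¬ (k + 1 = 2 + k) := by omega
  refine LinearMap.ext fun f => funext fun s => ?_
  simp only [Module.End.mul_apply, LinearMap.smul_apply, Pi.smul_apply, smul_eq_mul,
    Kd, Xpd, LinearMap.coe_mk, AddHom.coe_mk]
  by_cases h : k + 1 ∈ s.1 ∧ k ∉ s.1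
  · simp only [dif_pos h, Finset.mem_insert, Finset.mem_erase]
    simp [e1, e2, e3, e4, e5, e6, e7, e8, e9, e10, e11, e12, e13, e14, h.1, h.2]
    by_cases hk : k + 2 ∈ s.1 <;>
      simp [hk, e1, e2, e3, e4, e5, e6, e7, e8, e9, e10, e11, e12, e13, e14] <;>
      first
      | rfl
      | (refine Or.inl ?_; field_simp [qq_ne_zero]; try ring)
      | (field_simp [qq_ne_zero]; try ring)
  · simp [dif_neg h]

lemma R6 (n a k : ℕ) (hkn : k + 1 < n) :
    Kd n a (k+1) * Xmd n a k hkn = qq • (Xmd n a k hkn * Kd n a (k+1)) := by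
  have e1 : k ≠ k + 1 := by omega
  have e2 : k ≠ k + 2 := by omega
  have e3 : k + 1 ≠ k + 2 := by omega
  have e4 : ¬ (1 + k = k) := by omega
  have e5 : ¬ (2 + k = k) := by omega
  have e6 : ¬ (2 + k = k + 1) := by omega
  have e7 : ¬ (1 + k = k + 2) := by omega
  have e8 : ¬ (k + 1 = k) := by omega
  have e9 : ¬ (k + 2 = k) := by omega
  have e10 : ¬ (k + 2 = k + 1) := by omega
  have e11 : ¬ (1 + k = k + 1 + 1) := by omega
  have e12 : ¬ (k = 1 + k) := by omega
  have e13 : ¬ (k = 2 + k) := by omega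
  have e14 : ¬ (k + 1 = 2 + k) := by omega
  refine LinearMap.ext fun f => funext fun s => ?_
  simp only [Module.End.mul_apply, LinearMap.smul_apply, Pi.smul_apply, smul_eq_mul,
    Kd, Xmd, LinearMap.coe_mk, AddHom.coe_mk]
  by_cases h : k ∈ s.1 ∧ k + 1 ∉ s.1
  · simp only [dif_pos h, Finset.mem_insert, Finset.mem_erase]
    simp [e1, e2, e3, e4, e5, e6, e7, e8, e9, e10, e11, e12, e13, e14, h.1, h.2]
    by_cases hk : k + 2 ∈ s.1 <;>
      simp [hk, e1, e2, e3, e4, e5, e6, e7, e8, e9, e10, e11, e12, e13, e14] <;>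
      first
      | rfl
      | (refine Or.inl ?_; field_simp [qq_ne_zero]; try ring)
      | (field_simp [qq_ne_zero]; try ring)
  · simp [dif_neg h]


/-- for every `n ≥ 3` and `0 ≤ a ≤ n`, the recursively defined operators on
`V_a^n` satisfy the six commutation relations between `K_{n-1}, K_{n-2}` and
`X_{n-1}^±, X_{n-2}^±`. -/
theorem statement5 (n : ℕ) (hn : 3 ≤ n) (a : ℕ) (ha : a ≤ n) :
    KOp n a (n-1) * XpOp n a (n-1) = (qq ^ 2 : A) • (XpOp n a (n-1) * KOp n a (n-1)) ∧
    KOp n a (n-1) * XmOp n a (n-1) = ((qq ^ 2 : A))⁻¹ • (XmOp n a (n-1) * KOp n a (n-1)) ∧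
    KOp n a (n-2) * XpOp n a (n-1) = qq⁻¹ • (XpOp n a (n-1) * KOp n a (n-2)) ∧
    KOp n a (n-2) * XmOp n a (n-1) = qq • (XmOp n a (n-1) * KOp n a (n-2)) ∧
    KOp n a (n-1) * XpOp n a (n-2) = qq⁻¹ • (XpOp n a (n-2) * KOp n a (n-1)) ∧
    KOp n a (n-1) * XmOp n a (n-2) = qq • (XmOp n a (n-2) * KOp n a (n-1)) := by

  obtain ⟨m, rfl⟩ : ∃ m, n = m + 3 := ⟨n - 3, by omega⟩
  have e1 : m + 3 - 1 = m + 2 := rfl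
  have e2 : m + 3 - 2 = m + 1 := rfl
  rw [e1, e2]
  have hK1 : KOp (m+3) a (m+2) = Kd (m+3) a (m+1) := Ktop (m+1) a
  have hXp1 : XpOp (m+3) a (m+2) = Xpd (m+3) a (m+1) := Xptop (m+1) a
  have hXm1 : XmOp (m+3) a (m+2) = Xmd (m+3) a (m+1) (by omega) := Xmtop (m+1) a
  rw [hK1, hXp1, hXm1, Kmid m a ha, Xpmid m a ha, Xmmid m a ha]
  exact ⟨R1 _ _ _, R2 _ _ _ _, R3 _ _ _, R4 _ _ _ _, R5 _ _ _, R6 _ _ _ _⟩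


end
end
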